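/- (Lemma 3.3) There exists a constant c>0, independent of the mesh parameter h, such that for every y ∈ L²(Γ) the discrete Kirchhoff operator satisfies the stability estimate |S_h* y|₂ = |K_h(P_h y)|₂ ≤ c ‖y‖_{L²(Γ)}. -/

import Mathlib

open MeasureTheory Set

/-- A metric graph: a finite graph where each edge `e` is identified with the
interval `[0, len e]`, with `src e` sitting at coordinate `0` and `dst e` at `len e`. -/
structure MGraph where
  V : Type
  E : Type
  fintV : Fintype V
  fintE : Fintype E
  decV : DecidableEq V
  src : E → V
  dst : E → V
  len : E → ℝ
  len_pos : ∀ e, 0 < len e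

attribute [instance] MGraph.fintV MGraph.fintE MGraph.decV

/-- A function on the metric graph, given edgewise. -/
abbrev GFun (G : MGraph) := G.E → ℝ → ℝ

namespace MGraph

variable (G : MGraph)

/-- The derivative along edge `e` (within the edge interval). -/
noncomputable def edgeDeriv (y : GFun G) (e : G.E) : ℝ → ℝ :=
  derivWithin (y e) (Icc (0:ℝ) (G.len e))

/-- The second derivative along edge `e`. -/
noncomputable def edgeDeriv2 (y : GFun G) (e : G.E) : ℝ → ℝ :=
  derivWithin (G.edgeDeriv y e) (Icc (0:ℝ) (G.len e))

/-- The `L²(Γ)` inner product `(f,g) = Σ_e ∫_e f g`. -/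
noncomputable def ip2 (f g : GFun G) : ℝ :=
  ∑ e : G.E, ∫ x in (0:ℝ)..(G.len e), f e x * g e x

/-- The bilinear form `a(y,w) = Σ_e ∫_e (y' w' + c₀ y w)`. -/
noncomputable def bform (c0 y w : GFun G) : ℝ :=
  ∑ e : G.E, ∫ x in (0:ℝ)..(G.len e),
    (G.edgeDeriv y e x * G.edgeDeriv w e x + c0 e x * y e x * w e x)

/-- Membership in `L²(Γ)` (edgewise square integrability). -/
def MemL2 (f : GFun G) : Prop :=
  ∀ e, IntervalIntegrable (fun x => (f e x)^2) volume 0 (G.len e)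

/-- The squared `L²(Γ)`-norm. -/
noncomputable def l2normSq (f : GFun G) : ℝ :=
  ∑ e : G.E, ∫ x in (0:ℝ)..(G.len e), (f e x)^2

/-- The squared `H¹(Γ)`-norm. -/
noncomputable def h1normSq (y : GFun G) : ℝ :=
  G.l2normSq y + ∑ e : G.E, ∫ x in (0:ℝ)..(G.len e), (G.edgeDeriv y e x)^2

/-- The squared `H²(Γ)`-seminorm `Σ_e ‖y''‖²`. -/
noncomputable def h2semiSq (y : GFun G) : ℝ :=
  ∑ e : G.E, ∫ x in (0:ℝ)..(G.len e), (G.edgeDeriv2 y e x)^2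

/-- Membership in `H¹(Γ)` with vertex values `yv` (in particular continuity
at the vertices of the graph). -/
def MemH1 (y : GFun G) (yv : G.V → ℝ) : Prop :=
  (∀ e, ContinuousOn (y e) (Icc (0:ℝ) (G.len e))) ∧
  (∀ e, ∃ s : Finset ℝ, ∀ x ∈ Icc (0:ℝ) (G.len e), x ∉ s →
      DifferentiableWithinAt ℝ (y e) (Icc (0:ℝ) (G.len e)) x) ∧
  (∀ e, y e 0 = yv (G.src e)) ∧
  (∀ e, y e (G.len e) = yv (G.dst e)) ∧
  G.MemL2 y ∧
  (∀ e, IntervalIntegrable (fun x => (G.edgeDeriv y e x)^2) volume 0 (G.len e))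

/-- Membership in `H¹_D(Γ)`: `H¹(Γ)` with vanishing values at the Dirichlet vertices. -/
def MemH1D (VD : Finset G.V) (y : GFun G) (yv : G.V → ℝ) : Prop :=
  G.MemH1 y yv ∧ ∀ v ∈ VD, yv v = 0

/-- Membership in `H²(Γ)` (edgewise; the function is `C¹` on each closed edge and the
first derivative is again weakly differentiable with square-integrable derivative). -/
def MemH2 (y : GFun G) : Prop :=
  (∀ e, ∀ x ∈ Icc (0:ℝ) (G.len e), DifferentiableWithinAt ℝ (y e) (Icc (0:ℝ) (G.len e)) x) ∧
  (∀ e, ContinuousOn (G.edgeDeriv y e) (Icc (0:ℝ) (G.len e))) ∧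
  (∀ e, ∀ᵐ x ∂(volume.restrict (Ioo (0:ℝ) (G.len e))),
      DifferentiableWithinAt ℝ (G.edgeDeriv y e) (Icc (0:ℝ) (G.len e)) x) ∧
  (∀ e, IntervalIntegrable (fun x => (G.edgeDeriv2 y e x)^2) volume 0 (G.len e))

/-- The Kirchhoff operator `(Ky)(v) = Σ_{e ∈ E_v} y|_e'(v)`, where the derivative along each
incident edge is taken in the direction pointing towards `v`. -/
noncomputable def Kop (y : GFun G) (v : G.V) : ℝ :=
  ∑ e : G.E, ((if G.dst e = v then G.edgeDeriv y e (G.len e) else 0)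
    - (if G.src e = v then G.edgeDeriv y e 0 else 0))

/-- Adjacency of vertices. -/
def Adj (v w : G.V) : Prop :=
  ∃ e, (G.src e = v ∧ G.dst e = w) ∨ (G.src e = w ∧ G.dst e = v)

/-- Connectedness of the graph. -/
def Connected : Prop := ∀ v w : G.V, Relation.ReflTransGen G.Adj v w

/-- The Euclidean norm of the restriction of `u` to the Dirichlet vertex set. -/
noncomputable def dnorm (VD : Finset G.V) (u : G.V → ℝ) : ℝ :=
  Real.sqrt (∑ v ∈ VD, (u v)^2)

/-- `y` is affine on each cell of the equidistant grid with `n e` subintervals on edge `e`. -/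
def PiecewiseAffine (n : G.E → ℕ) (y : GFun G) : Prop :=
  ∀ e, ∀ k : ℕ, k < n e →
    ∃ p q : ℝ, ∀ x ∈ Icc ((k : ℝ) * (G.len e / (n e : ℝ))) (((k : ℝ) + 1) * (G.len e / (n e : ℝ))),
      y e x = p * x + q

/-- Membership in the finite element space `V_h` (continuous, edgewise piecewise affine). -/
def MemVh (n : G.E → ℕ) (y : GFun G) (yv : G.V → ℝ) : Prop :=
  G.MemH1 y yv ∧ G.PiecewiseAffine n y

/-- Membership in `V_{h,D} = V_h ∩ H¹_D(Γ)`. -/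
def MemVhD (VD : Finset G.V) (n : G.E → ℕ) (y : GFun G) (yv : G.V → ℝ) : Prop :=
  G.MemVh n y yv ∧ ∀ v ∈ VD, yv v = 0

/-- The nodal (hat) basis function of `V_h` attached to the vertex `v`. -/
noncomputable def hatFn (n : G.E → ℕ) (v : G.V) : GFun G :=
  fun e x =>
    (if G.src e = v then max 0 (1 - x / (G.len e / (n e : ℝ))) else 0)
    + (if G.dst e = v then max 0 (1 - (G.len e - x) / (G.len e / (n e : ℝ))) else 0)

/-- The discrete (variational) Kirchhoff operator applied to `p_h = P_h ydata`:
`(K_h p_h)(v) = a(φ_v, p_h) - (ydata, φ_v)`. -/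
noncomputable def Khop (c0 : GFun G) (n : G.E → ℕ) (ydata ph : GFun G) (v : G.V) : ℝ :=
  G.bform c0 (G.hatFn n v) ph - G.ip2 ydata (G.hatFn n v)

/-- The objective functional `½‖y-ȳ‖² + (β/2)|u|₂²` of the optimal control problem. -/
noncomputable def objective (VD : Finset G.V) (ybar : GFun G) (β : ℝ)
    (u : G.V → ℝ) (y : GFun G) : ℝ :=
  (1/2) * G.l2normSq (fun e x => y e x - ybar e x) + (β/2) * ∑ v ∈ VD, (u v)^2

/-- `(u, y)` is feasible for the continuous optimal control problem:
`y` is a weak solution of the state equation with Dirichlet data `u`. -/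
def Feasible (VD : Finset G.V) (c0 f : GFun G) (u : G.V → ℝ)
    (y : GFun G) (yv : G.V → ℝ) : Prop :=
  G.MemH1 y yv ∧ (∀ v ∈ VD, yv v = u v) ∧
  ∀ w wv, G.MemH1D VD w wv → G.bform c0 y w = G.ip2 f w

/-- `(u, y)` is feasible for the discretized optimal control problem:
`y ∈ V_h` is a Galerkin solution of the state equation with Dirichlet data `u`. -/
def FeasibleH (VD : Finset G.V) (n : G.E → ℕ) (c0 f : GFun G) (u : G.V → ℝ)
    (y : GFun G) (yv : G.V → ℝ) : Prop :=
  G.MemVh n y yv ∧ (∀ v ∈ VD, yv v = u v) ∧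
  ∀ w wv, G.MemVhD VD n w wv → G.bform c0 y w = G.ip2 f w

/-- The edgewise-affine extension `S̃_h u` of Dirichlet data `u` (value `u v` at Dirichlet
vertices, `0` at Kirchhoff vertices, affine along each whole edge). -/
noncomputable def tildeExt (VD : Finset G.V) (u : G.V → ℝ) : GFun G :=
  fun e x =>
    (if G.src e ∈ VD then u (G.src e) else 0)
    + ((if G.dst e ∈ VD then u (G.dst e) else 0)
        - (if G.src e ∈ VD then u (G.src e) else 0)) * x / G.len e

end MGraph

open MeasureTheory Set

lemma aux_le_zero {X c : ℝ} (hc : 0 ≤ c) (h : ∀ ε > 0, X ≤ ε * c) : X ≤ 0 := by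
  by_contra hX
  push_neg at hX
  rcases eq_or_lt_of_le hc with hc0 | hc0
  · have := h 1 one_pos; rw [← hc0] at this; simp at this; linarith
  · have := h (X / (2 * c)) (by positivity)
    rw [div_mul_eq_mul_div, mul_comm] at this
    have : X ≤ X / 2 := by
      calc X ≤ c * X / (2 * c) := this
        _ = X / 2 := by field_simp
    linarith

lemma aux_opt {X a b : ℝ} (ha : 0 ≤ a) (hb : 0 ≤ b)
    (h : ∀ ε > 0, X ≤ ε / 2 * a + 1 / (2 * ε) * b) :
    X ≤ Real.sqrt a * Real.sqrt b := by
  rcases eq_or_lt_of_le ha with ha0 | ha0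
  · have hX : X ≤ 0 := by
      apply aux_le_zero (c := b / 2) (by positivity)
      intro ε hε
      have := h (1/ε) (by positivity)
      rw [← ha0] at this
      calc X ≤ 1/ε/2 * 0 + 1/(2*(1/ε)) * b := this
        _ = ε * (b/2) := by field_simp; ring
    exact hX.trans (by positivity)
  rcases eq_or_lt_of_le hb with hb0 | hb0
  · have hX : X ≤ 0 := by
      apply aux_le_zero (c := a / 2) (by positivity)
      intro ε hε
      have := h ε hε
      rw [← hb0] at this
      calc X ≤ ε/2 * a + 1/(2*ε) * 0 := this
        _ = ε * (a/2) := by ring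
    exact hX.trans (by positivity)
  · have hsa : (0:ℝ) < Real.sqrt a := Real.sqrt_pos.2 ha0
    have hsb : (0:ℝ) < Real.sqrt b := Real.sqrt_pos.2 hb0
    have hX := h (Real.sqrt b / Real.sqrt a) (by positivity)
    have key : Real.sqrt b / Real.sqrt a / 2 * a + 1 / (2 * (Real.sqrt b / Real.sqrt a)) * b
        = Real.sqrt a * Real.sqrt b := by
      set sa := Real.sqrt a with hsa'
      set sb := Real.sqrt b with hsb'
      have e1 : a = sa*sa := (Real.mul_self_sqrt ha).symm
      have e2 : b = sb*sb := (Real.mul_self_sqrt hb).symm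
      rw [e1, e2]
      field_simp
      ring
    linarith [hX, key.le, key.ge]

lemma aux_cs_L2 {L : ℝ} (f g : ℝ → ℝ)
    (hf : IntegrableOn (fun x => (f x)^2) (Ioc 0 L))
    (hg : IntegrableOn (fun x => (g x)^2) (Ioc 0 L)) :
    |∫ x in Ioc (0:ℝ) L, f x * g x| ≤
      Real.sqrt (∫ x in Ioc (0:ℝ) L, (f x)^2) * Real.sqrt (∫ x in Ioc (0:ℝ) L, (g x)^2) := by
  set A := ∫ x in Ioc (0:ℝ) L, (f x)^2 with hA
  set B := ∫ x in Ioc (0:ℝ) L, (g x)^2 with hB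
  have hA0 : 0 ≤ A := setIntegral_nonneg measurableSet_Ioc (fun x _ => sq_nonneg _)
  have hB0 : 0 ≤ B := setIntegral_nonneg measurableSet_Ioc (fun x _ => sq_nonneg _)
  by_cases hint : IntegrableOn (fun x => f x * g x) (Ioc 0 L)
  · apply aux_opt hA0 hB0
    intro ε hε
    have h1 : |∫ x in Ioc (0:ℝ) L, f x * g x| ≤ ∫ x in Ioc (0:ℝ) L, |f x * g x| :=
      norm_integral_le_integral_norm (fun x => f x * g x)
    have h2 : ∫ x in Ioc (0:ℝ) L, |f x * g x| ≤
        ∫ x in Ioc (0:ℝ) L, (ε/2 * (f x)^2 + 1/(2*ε) * (g x)^2) := by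
      apply integral_mono hint.abs ((hf.const_mul (ε/2)).add (hg.const_mul (1/(2*ε))))
      intro x
      simp only [Pi.add_apply]
      have h3 : |f x * g x| = |f x| * |g x| := abs_mul _ _
      have h4 : (f x)^2 = |f x|^2 := (sq_abs _).symm
      have h5 : (g x)^2 = |g x|^2 := (sq_abs _).symm
      simp only [h3, h4, h5]
      have key : 2*ε*(|f x| * |g x|) ≤ ε^2 * |f x|^2 + |g x|^2 := by
        nlinarith [sq_nonneg (ε*|f x| - |g x|)]
      have hpos : (0:ℝ) < 2*ε := by linarith
      calc |f x| * |g x| = (2*ε*(|f x| * |g x|))/(2*ε) := by field_simp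
        _ ≤ (ε^2 * |f x|^2 + |g x|^2)/(2*ε) := by gcongr
        _ = ε/2 * |f x|^2 + 1/(2*ε) * |g x|^2 := by field_simp
    have h3 : ∫ x in Ioc (0:ℝ) L, (ε/2 * (f x)^2 + 1/(2*ε) * (g x)^2) =
        ε/2 * A + 1/(2*ε) * B := by
      rw [integral_add (hf.const_mul (ε/2)) (hg.const_mul (1/(2*ε))),
        integral_const_mul, integral_const_mul]
    linarith
  · rw [integral_undef hint]
    simp only [abs_zero]
    positivity

lemma aux_sum_cs {ι : Type*} [Fintype ι] (f g : ι → ℝ) :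
    ∑ i, f i * g i ≤ Real.sqrt (∑ i, (f i)^2) * Real.sqrt (∑ i, (g i)^2) := by
  have h1 : ∑ i, f i * g i ≤ |∑ i, f i * g i| := le_abs_self _
  have h2 : |∑ i, f i * g i| = Real.sqrt ((∑ i, f i * g i)^2) := (Real.sqrt_sq_eq_abs _).symm
  rw [← Real.sqrt_mul (Finset.sum_nonneg fun i _ => sq_nonneg (f i))]
  refine h1.trans (h2.le.trans (Real.sqrt_le_sqrt ?_))
  exact Finset.sum_mul_sq_le_sq_mul_sq _ _ _

lemma aux_int_sq_le {L M : ℝ} (hL : 0 ≤ L) (hM : 0 ≤ M) (f : ℝ → ℝ)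
    (hf : IntegrableOn (fun x => (f x)^2) (Ioc 0 L))
    (hb : ∀ x ∈ Ioc (0:ℝ) L, |f x| ≤ M) :
    ∫ x in Ioc (0:ℝ) L, (f x)^2 ≤ M^2 * L := by
  have h1 : ∫ x in Ioc (0:ℝ) L, (f x)^2 ≤ ∫ _x in Ioc (0:ℝ) L, M^2 := by
    apply setIntegral_mono_on hf (integrableOn_const (by
      rw [Real.volume_Ioc]; exact ENNReal.ofReal_ne_top)) measurableSet_Ioc
    intro x hx
    have := hb x hx
    calc (f x)^2 = |f x|^2 := (sq_abs _).symm
      _ ≤ M^2 := by nlinarith [abs_nonneg (f x)]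
  have h2 : ∫ _x in Ioc (0:ℝ) L, (M^2 : ℝ) = M^2 * L := by
    rw [setIntegral_const, measureReal_def, Real.volume_Ioc, smul_eq_mul, sub_zero, ENNReal.toReal_ofReal hL,
      mul_comm]
  linarith

lemma aux_sqrt_int_le {L M : ℝ} (hL : 0 ≤ L) (hM : 0 ≤ M) (f : ℝ → ℝ)
    (hf : IntegrableOn (fun x => (f x)^2) (Ioc 0 L))
    (hb : ∀ x ∈ Ioc (0:ℝ) L, |f x| ≤ M) :
    Real.sqrt (∫ x in Ioc (0:ℝ) L, (f x)^2) ≤ M * Real.sqrt L := by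
  have := Real.sqrt_le_sqrt (aux_int_sq_le hL hM f hf hb)
  rwa [Real.sqrt_mul (sq_nonneg M), Real.sqrt_sq hM] at this

lemma aux_ae_Ioo {L : ℝ} (s : Set ℝ) (hs : s.Countable) :
    ∀ᵐ x ∂(volume.restrict (Ioc (0:ℝ) L)), x ∈ Ioo (0:ℝ) L ∧ x ∉ s := by
  have h1 : volume (s ∪ {L}) = 0 :=
    (hs.union (countable_singleton L)).measure_zero _
  have h2 : ∀ᵐ x ∂volume, x ∉ s ∪ {L} := measure_eq_zero_iff_ae_notMem.1 h1
  have h3 : ∀ᵐ x ∂(volume.restrict (Ioc (0:ℝ) L)), x ∉ s ∪ {L} := ae_restrict_of_ae h2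
  have h4 : ∀ᵐ x ∂(volume.restrict (Ioc (0:ℝ) L)), x ∈ Ioc (0:ℝ) L :=
    ae_restrict_mem measurableSet_Ioc
  filter_upwards [h3, h4] with x hx1 hx2
  simp only [mem_union, mem_singleton_iff, not_or] at hx1
  exact ⟨⟨hx2.1, lt_of_le_of_ne hx2.2 hx1.2⟩, hx1.1⟩

lemma aux_edgeDeriv_ae (f : ℝ → ℝ) (L : ℝ) :
    (fun x => derivWithin f (Icc (0:ℝ) L) x) =ᶠ[ae (volume.restrict (Ioc (0:ℝ) L))] deriv f := by
  filter_upwards [aux_ae_Ioo (L := L) ∅ countable_empty] with x hx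
  exact derivWithin_of_mem_nhds (Icc_mem_nhds hx.1.1 hx.1.2)

open MeasureTheory Set

namespace MGraph
variable (G : MGraph)

lemma hat_term1_hasDerivAt {L h x : ℝ} (hh : 0 < h) (hx : x ≠ h) :
    ∃ d : ℝ, |d| ≤ 1/h ∧ HasDerivAt (fun y => max 0 (1 - y/h)) d x := by
  rcases lt_or_gt_of_ne hx with hlt | hgt
  · refine ⟨-(1/h), by rw [abs_neg, abs_of_nonneg (by positivity)], ?_⟩
    have base : HasDerivAt (fun y => 1 - y/h) (-(1/h)) x := by
      simpa using HasDerivAt.const_sub 1 ((hasDerivAt_id x).div_const h)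
    have hev : (fun y => max 0 (1 - y/h)) =ᶠ[nhds x] (fun y => 1 - y/h) := by
      filter_upwards [Iio_mem_nhds hlt] with y hy
      exact max_eq_right (by
        have : y / h < 1 := (div_lt_one hh).2 hy
        linarith)
    exact hev.hasDerivAt_iff.2 base
  · refine ⟨0, by simp; positivity, ?_⟩
    have hev : (fun y => max 0 (1 - y/h)) =ᶠ[nhds x] (fun _ => (0:ℝ)) := by
      filter_upwards [Ioi_mem_nhds hgt] with y hy
      exact max_eq_left (by
        have : (1:ℝ) < y / h := (one_lt_div hh).2 hy
        linarith)
    exact hev.hasDerivAt_iff.2 (hasDerivAt_const x 0)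

lemma hat_term2_hasDerivAt {L h x : ℝ} (hh : 0 < h) (hx : x ≠ L - h) :
    ∃ d : ℝ, |d| ≤ 1/h ∧ HasDerivAt (fun y => max 0 (1 - (L - y)/h)) d x := by
  rcases lt_or_gt_of_ne hx with hlt | hgt
  · refine ⟨0, by simp; positivity, ?_⟩
    have hev : (fun y => max 0 (1 - (L - y)/h)) =ᶠ[nhds x] (fun _ => (0:ℝ)) := by
      filter_upwards [Iio_mem_nhds hlt] with y hy
      exact max_eq_left (by
        have h1 : h < L - y := by simp only [mem_Iio] at hy; linarith
        have : (1:ℝ) < (L - y) / h := (one_lt_div hh).2 h1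
        linarith)
    exact hev.hasDerivAt_iff.2 (hasDerivAt_const x 0)
  · refine ⟨-(-1/h), by rw [abs_neg, abs_div, abs_neg, abs_one, abs_of_nonneg hh.le], ?_⟩
    have base : HasDerivAt (fun y => 1 - (L - y)/h) (-(-1/h)) x :=
      HasDerivAt.const_sub 1 (((hasDerivAt_id x).const_sub L).div_const h)
    have hev : (fun y => max 0 (1 - (L - y)/h)) =ᶠ[nhds x] (fun y => 1 - (L - y)/h) := by
      filter_upwards [Ioi_mem_nhds hgt] with y hy
      exact max_eq_right (by
        have h1 : L - y < h := by simp only [mem_Ioi] at hy; linarith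
        have : (L - y) / h < 1 := (div_lt_one hh).2 h1
        linarith)
    exact hev.hasDerivAt_iff.2 base

lemma hat_hasDerivAt (n : G.E → ℕ) (v : G.V) (e : G.E) (hn : 0 < n e)
    {x : ℝ} (hx1 : x ≠ G.len e / (n e : ℝ)) (hx2 : x ≠ G.len e - G.len e / (n e : ℝ)) :
    ∃ d : ℝ, |d| ≤ 2 / (G.len e / (n e : ℝ)) ∧ HasDerivAt (G.hatFn n v e) d x := by
  have hL := G.len_pos e
  have hh : 0 < G.len e / (n e : ℝ) := by
    have : (0:ℝ) < (n e : ℝ) := by exact_mod_cast hn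
    positivity
  obtain ⟨d1, hd1, hD1⟩ := hat_term1_hasDerivAt (L := G.len e) hh hx1
  obtain ⟨d2, hd2, hD2⟩ := hat_term2_hasDerivAt (L := G.len e) hh hx2
  set h := G.len e / (n e : ℝ)
  have e1 : ∃ c1 : ℝ, |c1| ≤ 1/h ∧
      HasDerivAt (fun y => if G.src e = v then max 0 (1 - y/h) else 0) c1 x := by
    by_cases hsv : G.src e = v
    · exact ⟨d1, hd1, by simpa [hsv] using hD1⟩
    · exact ⟨0, by simp; positivity, by simpa [hsv] using hasDerivAt_const x 0⟩
  have e2 : ∃ c2 : ℝ, |c2| ≤ 1/h ∧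
      HasDerivAt (fun y => if G.dst e = v then max 0 (1 - (G.len e - y)/h) else 0) c2 x := by
    by_cases hsv : G.dst e = v
    · exact ⟨d2, hd2, by simpa [hsv] using hD2⟩
    · exact ⟨0, by simp; positivity, by simpa [hsv] using hasDerivAt_const x 0⟩
  obtain ⟨c1, hc1, hC1⟩ := e1
  obtain ⟨c2, hc2, hC2⟩ := e2
  refine ⟨c1 + c2, ?_, ?_⟩
  · calc |c1 + c2| ≤ |c1| + |c2| := abs_add_le _ _
      _ ≤ 1/h + 1/h := add_le_add hc1 hc2
      _ = 2/h := by ring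
  · exact hC1.add hC2

lemma hat_val0 (n : G.E → ℕ) (v : G.V) (e : G.E) (hn : 0 < n e) :
    G.hatFn n v e 0 = if G.src e = v then 1 else 0 := by
  have hL := G.len_pos e
  have hn' : (0:ℝ) < (n e : ℝ) := by exact_mod_cast hn
  have key : G.len e / (G.len e / (n e : ℝ)) = (n e : ℝ) := by
    field_simp
  unfold hatFn
  rw [zero_div, sub_zero, sub_zero]
  have h2 : max 0 (1 - G.len e / (G.len e / (n e:ℝ))) = 0 := by
    rw [key]
    have : (1:ℝ) ≤ (n e : ℝ) := by exact_mod_cast hn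
    exact max_eq_left (by linarith)
  rw [h2]
  simp [max_eq_right]

lemma hat_valL (n : G.E → ℕ) (v : G.V) (e : G.E) (hn : 0 < n e) :
    G.hatFn n v e (G.len e) = if G.dst e = v then 1 else 0 := by
  have hL := G.len_pos e
  have hn' : (0:ℝ) < (n e : ℝ) := by exact_mod_cast hn
  have key : G.len e / (G.len e / (n e : ℝ)) = (n e : ℝ) := by field_simp
  unfold hatFn
  rw [sub_self, zero_div, sub_zero]
  have h2 : max 0 (1 - G.len e / (G.len e / (n e:ℝ))) = 0 := by
    rw [key]
    have : (1:ℝ) ≤ (n e : ℝ) := by exact_mod_cast hn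
    exact max_eq_left (by linarith)
  rw [h2]
  simp [max_eq_right]

lemma hat_bound (n : G.E → ℕ) (v : G.V) (e : G.E) (hn : 0 < n e)
    {x : ℝ} (hx : x ∈ Icc (0:ℝ) (G.len e)) :
    0 ≤ G.hatFn n v e x ∧ G.hatFn n v e x ≤ 2 := by
  have hL := G.len_pos e
  have hn' : (0:ℝ) < (n e : ℝ) := by exact_mod_cast hn
  have hh : 0 < G.len e / (n e : ℝ) := by positivity
  obtain ⟨hx0, hxL⟩ := hx
  have t1 : (0:ℝ) ≤ max 0 (1 - x / (G.len e / (n e:ℝ))) := le_max_left _ _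
  have t1' : max 0 (1 - x / (G.len e / (n e:ℝ))) ≤ 1 := by
    apply max_le (by norm_num)
    have : 0 ≤ x / (G.len e / (n e:ℝ)) := by positivity
    linarith
  have t2 : (0:ℝ) ≤ max 0 (1 - (G.len e - x) / (G.len e / (n e:ℝ))) := le_max_left _ _
  have t2' : max 0 (1 - (G.len e - x) / (G.len e / (n e:ℝ))) ≤ 1 := by
    apply max_le (by norm_num)
    have : 0 ≤ (G.len e - x) / (G.len e / (n e:ℝ)) := by
      apply div_nonneg (by linarith) hh.le
    linarith
  unfold hatFn
  constructor
  · split_ifs <;> linarith [t1, t2]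
  · split_ifs <;> linarith [t1, t1', t2, t2']

end MGraph

open MeasureTheory Set

namespace MGraph
variable (G : MGraph)

/-- Dirichlet unit data at vertex `v`. -/
noncomputable def deltaV (v : G.V) : G.V → ℝ := fun u => if u = v then 1 else 0

/-- The correction function `w = φ_v - S̃_h δ_v`. -/
noncomputable def wFn (VD : Finset G.V) (n : G.E → ℕ) (v : G.V) : GFun G :=
  fun e x => G.hatFn n v e x - G.tildeExt VD (G.deltaV v) e x

lemma tilde_hasDerivAt (VD : Finset G.V) (u : G.V → ℝ) (e : G.E) (x : ℝ) :
    HasDerivAt (G.tildeExt VD u e)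
      (((if G.dst e ∈ VD then u (G.dst e) else 0) - (if G.src e ∈ VD then u (G.src e) else 0))
        / G.len e) x := by
  have h : HasDerivAt (fun y : ℝ =>
      (if G.src e ∈ VD then u (G.src e) else 0) +
      ((if G.dst e ∈ VD then u (G.dst e) else 0) - (if G.src e ∈ VD then u (G.src e) else 0))
        * y / G.len e)
      (((if G.dst e ∈ VD then u (G.dst e) else 0) - (if G.src e ∈ VD then u (G.src e) else 0))
        / G.len e) x := by
    have h1 := (((hasDerivAt_id x).const_mul
      ((if G.dst e ∈ VD then u (G.dst e) else 0) - (if G.src e ∈ VD then u (G.src e) else 0))).div_const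
      (G.len e)).const_add (if G.src e ∈ VD then u (G.src e) else 0)
    simpa [mul_div_assoc] using h1
  exact h

lemma tilde_continuous (VD : Finset G.V) (u : G.V → ℝ) (e : G.E) :
    Continuous (G.tildeExt VD u e) := by
  unfold tildeExt; fun_prop

lemma hat_continuous (n : G.E → ℕ) (v : G.V) (e : G.E) :
    Continuous (G.hatFn n v e) := by
  unfold hatFn
  split_ifs <;> fun_prop

lemma deltaV_mem (v u : G.V) : 0 ≤ G.deltaV v u ∧ G.deltaV v u ≤ 1 := by
  unfold deltaV; split_ifs <;> norm_num

lemma tilde_bound (VD : Finset G.V) (u : G.V → ℝ) (hu : ∀ w, 0 ≤ u w ∧ u w ≤ 1)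
    (e : G.E) {x : ℝ} (hx : x ∈ Icc (0:ℝ) (G.len e)) :
    |G.tildeExt VD u e x| ≤ 1 := by
  have hL := G.len_pos e
  set A := (if G.src e ∈ VD then u (G.src e) else 0) with hA
  set B := (if G.dst e ∈ VD then u (G.dst e) else 0) with hB
  have hA0 : 0 ≤ A := by rw [hA]; split_ifs; exacts [(hu _).1, le_refl 0]
  have hA1 : A ≤ 1 := by rw [hA]; split_ifs; exacts [(hu _).2, by norm_num]
  have hB0 : 0 ≤ B := by rw [hB]; split_ifs; exacts [(hu _).1, le_refl 0]
  have hB1 : B ≤ 1 := by rw [hB]; split_ifs; exacts [(hu _).2, by norm_num]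
  have ht : G.tildeExt VD u e x = A + (B - A) * (x / G.len e) := by
    unfold tildeExt; rw [← hA, ← hB, mul_div_assoc]
  set r := x / G.len e with hr
  have hr0 : 0 ≤ r := div_nonneg hx.1 hL.le
  have hr1 : r ≤ 1 := (div_le_one hL).2 hx.2
  rw [ht, abs_le]
  constructor <;> nlinarith [mul_nonneg hA0 (sub_nonneg.2 hr1), mul_nonneg hB0 hr0,
    mul_nonneg (sub_nonneg.2 hA1) (sub_nonneg.2 hr1), mul_nonneg (sub_nonneg.2 hB1) hr0]

lemma tilde_val0 (VD : Finset G.V) (u : G.V → ℝ) (e : G.E) :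
    G.tildeExt VD u e 0 = (if G.src e ∈ VD then u (G.src e) else 0) := by
  unfold tildeExt; simp

lemma tilde_valL (VD : Finset G.V) (u : G.V → ℝ) (e : G.E) :
    G.tildeExt VD u e (G.len e) = (if G.dst e ∈ VD then u (G.dst e) else 0) := by
  have hL := (G.len_pos e).ne'
  unfold tildeExt; field_simp; ring

lemma delta_src (VD : Finset G.V) {v : G.V} (hv : v ∈ VD) (e : G.E) :
    (if G.src e ∈ VD then G.deltaV v (G.src e) else 0) = if G.src e = v then 1 else 0 := by
  unfold deltaV
  by_cases h : G.src e = v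
  · simp [h, hv]
  · simp [h]

lemma delta_dst (VD : Finset G.V) {v : G.V} (hv : v ∈ VD) (e : G.E) :
    (if G.dst e ∈ VD then G.deltaV v (G.dst e) else 0) = if G.dst e = v then 1 else 0 := by
  unfold deltaV
  by_cases h : G.dst e = v
  · simp [h, hv]
  · simp [h]

end MGraph

open MeasureTheory Set

namespace MGraph
variable (G : MGraph)

lemma w_continuous (VD : Finset G.V) (n : G.E → ℕ) (v : G.V) (e : G.E) :
    Continuous (G.wFn VD n v e) :=
  (G.hat_continuous n v e).sub (G.tilde_continuous VD (G.deltaV v) e)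

lemma w_hasDerivAt (VD : Finset G.V) (n : G.E → ℕ) {v : G.V} (hv : v ∈ VD) (e : G.E)
    (hn : 0 < n e) {x : ℝ}
    (hx1 : x ≠ G.len e / (n e : ℝ)) (hx2 : x ≠ G.len e - G.len e / (n e : ℝ)) :
    ∃ d : ℝ, |d| ≤ 2 / (G.len e / (n e : ℝ)) + 1 / G.len e ∧
      HasDerivAt (G.wFn VD n v e) d x := by
  obtain ⟨d1, hd1, hD1⟩ := G.hat_hasDerivAt n v e hn hx1 hx2
  have hD2 := G.tilde_hasDerivAt VD (G.deltaV v) e x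
  set A := (if G.src e ∈ VD then G.deltaV v (G.src e) else 0) with hA
  set B := (if G.dst e ∈ VD then G.deltaV v (G.dst e) else 0) with hB
  have hL := G.len_pos e
  have hab : |B - A| ≤ 1 := by
    rw [hA, hB, G.delta_src VD hv e, G.delta_dst VD hv e, abs_le]
    constructor <;> split_ifs <;> norm_num
  refine ⟨d1 - (B - A) / G.len e, ?_, hD1.sub hD2⟩
  calc |d1 - (B - A) / G.len e| ≤ |d1| + |(B - A) / G.len e| := abs_sub _ _
    _ ≤ 2 / (G.len e / (n e : ℝ)) + 1 / G.len e := by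
        apply add_le_add hd1
        rw [abs_div, abs_of_nonneg hL.le]
        gcongr

lemma w_val0 (VD : Finset G.V) (n : G.E → ℕ) {v : G.V} (hv : v ∈ VD) (e : G.E)
    (hn : 0 < n e) : G.wFn VD n v e 0 = 0 := by
  unfold wFn
  rw [G.hat_val0 n v e hn, G.tilde_val0, G.delta_src VD hv e, sub_self]

lemma w_valL (VD : Finset G.V) (n : G.E → ℕ) {v : G.V} (hv : v ∈ VD) (e : G.E)
    (hn : 0 < n e) : G.wFn VD n v e (G.len e) = 0 := by
  unfold wFn
  rw [G.hat_valL n v e hn, G.tilde_valL, G.delta_dst VD hv e, sub_self]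

lemma w_bound (VD : Finset G.V) (n : G.E → ℕ) (v : G.V) (e : G.E) (hn : 0 < n e)
    {x : ℝ} (hx : x ∈ Icc (0:ℝ) (G.len e)) : |G.wFn VD n v e x| ≤ 3 := by
  have h1 := G.hat_bound n v e hn hx
  have h2 := G.tilde_bound VD (G.deltaV v) (G.deltaV_mem v) e hx
  unfold wFn
  rw [abs_le] at h2 ⊢
  constructor <;> linarith [h1.1, h1.2, h2.1, h2.2]

/-- a.e. strong measurability of `edgeDeriv`. -/
lemma edgeDeriv_aesm (f : GFun G) (e : G.E) :
    AEStronglyMeasurable (G.edgeDeriv f e) (volume.restrict (Ioc (0:ℝ) (G.len e))) :=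
  ((measurable_deriv (f e)).aestronglyMeasurable).congr (aux_edgeDeriv_ae (f e) (G.len e)).symm

end MGraph

open MeasureTheory Set

namespace MGraph
variable (G : MGraph)

lemma w_piecewiseAffine (VD : Finset G.V) (n : G.E → ℕ) {v : G.V} (hv : v ∈ VD)
    (hn : ∀ e, 0 < n e) : G.PiecewiseAffine n (G.wFn VD n v) := by
  intro e k hk
  have hL := G.len_pos e
  have hmR : (0:ℝ) < (n e : ℝ) := by exact_mod_cast hn e
  have hh : (0:ℝ) < G.len e / (n e : ℝ) := by positivity
  set L := G.len e with hLdef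
  set m := n e with hmdef
  set h := L / (m:ℝ) with hhdef
  have hmh : (m:ℝ) * h = L := by rw [hhdef]; field_simp
  refine ⟨(if G.src e = v then (if k = 0 then -(1/h) else 0) else 0)
      + (if G.dst e = v then (if k+1 = m then 1/h else 0) else 0) - ((if G.dst e = v then (1:ℝ) else 0) - (if G.src e = v then (1:ℝ) else 0))/L,
    (if G.src e = v then (if k = 0 then (1:ℝ) else 0) else 0)
      + (if G.dst e = v then (if k+1 = m then 1 - L/h else 0) else 0) - (if G.src e = v then (1:ℝ) else 0), ?_⟩
  intro x hx
  obtain ⟨hx1, hx2⟩ := hx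
  have hkm : (k:ℝ) + 1 ≤ (m:ℝ) := by exact_mod_cast Nat.succ_le_of_lt hk
  have hk0 : (0:ℝ) ≤ (k:ℝ) := Nat.cast_nonneg k
  have hx0 : 0 ≤ x := le_trans (by positivity) hx1
  have hxL : x ≤ L := by
    calc x ≤ ((k:ℝ)+1) * h := hx2
      _ ≤ (m:ℝ) * h := by nlinarith
      _ = L := hmh
  have term1 : max 0 (1 - x/h) = (if k = 0 then 1 - x/h else 0) := by
    by_cases hk' : k = 0
    · simp only [hk']
      apply max_eq_right
      have : x ≤ h := by
        have := hx2; rw [hk'] at this; push_cast at this; linarith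
      have : x / h ≤ 1 := (div_le_one hh).2 this
      linarith
    · simp only [hk', if_false]
      apply max_eq_left
      have hk1 : (1:ℝ) ≤ (k:ℝ) := by
        have : 1 ≤ k := Nat.one_le_iff_ne_zero.2 hk'
        exact_mod_cast this
      have hxh : h ≤ x := by nlinarith
      have : (1:ℝ) ≤ x / h := (one_le_div hh).2 hxh
      linarith
  have term2 : max 0 (1 - (L - x)/h) = (if k + 1 = m then 1 - (L-x)/h else 0) := by
    by_cases hk' : k + 1 = m
    · simp only [hk']
      apply max_eq_right
      have hkm' : (k:ℝ) = (m:ℝ) - 1 := by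
        have : ((k:ℝ) + 1) = (m:ℝ) := by exact_mod_cast hk'
        linarith
      have : L - x ≤ h := by
        have h1 : ((m:ℝ) - 1) * h ≤ x := by rw [← hkm']; exact hx1
        nlinarith
      have : (L - x)/h ≤ 1 := (div_le_one hh).2 this
      linarith
    · simp only [hk', if_false]
      apply max_eq_left
      have hkm2 : (k:ℝ) + 1 ≤ (m:ℝ) - 1 := by
        have h1 : k + 1 < m := lt_of_le_of_ne (Nat.succ_le_of_lt hk) hk'
        have : (k:ℝ) + 1 + 1 ≤ (m:ℝ) := by exact_mod_cast Nat.succ_le_of_lt h1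
        linarith
      have hxh : h ≤ L - x := by nlinarith
      have : (1:ℝ) ≤ (L - x) / h := (one_le_div hh).2 hxh
      linarith
  show G.wFn VD n v e x = _
  unfold wFn hatFn tildeExt
  rw [G.delta_src VD hv e, G.delta_dst VD hv e]
  rw [← hLdef, ← hmdef, ← hhdef]
  rw [term1, term2]
  have hLne : L ≠ 0 := hL.ne'
  have hhne : h ≠ 0 := hh.ne'
  split_ifs <;> field_simp <;> ring
end MGraph

open MeasureTheory Set

lemma aux_intOn_of_bound {L K : ℝ} (f : ℝ → ℝ)
    (hf : AEStronglyMeasurable f (volume.restrict (Ioc (0:ℝ) L)))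
    (hb : ∀ᵐ x ∂(volume.restrict (Ioc (0:ℝ) L)), ‖f x‖ ≤ K) :
    IntegrableOn f (Ioc (0:ℝ) L) := by
  apply Integrable.mono' (g := fun _ => K) _ hf hb
  exact integrableOn_const measure_Ioc_lt_top.ne

namespace MGraph
variable (G : MGraph)

lemma edgeDeriv_sq_aesm (f : GFun G) (e : G.E) :
    AEStronglyMeasurable (fun x => (G.edgeDeriv f e x)^2)
      (volume.restrict (Ioc (0:ℝ) (G.len e))) := by
  have h := G.edgeDeriv_aesm f e
  have : (fun x => (G.edgeDeriv f e x)^2) = fun x => G.edgeDeriv f e x * G.edgeDeriv f e x := by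
    funext x; ring
  rw [this]
  exact h.mul h

lemma w_edgeDeriv_ae_bound (VD : Finset G.V) (n : G.E → ℕ) {v : G.V} (hv : v ∈ VD)
    (e : G.E) (hn : 0 < n e) :
    ∀ᵐ x ∂(volume.restrict (Ioc (0:ℝ) (G.len e))),
      |G.edgeDeriv (G.wFn VD n v) e x| ≤ 2 / (G.len e / (n e : ℝ)) + 1 / G.len e := by
  filter_upwards [aux_ae_Ioo (L := G.len e)
    ({G.len e / (n e : ℝ), G.len e - G.len e / (n e : ℝ)} : Set ℝ)
    ((countable_singleton _).insert _)] with x hx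
  obtain ⟨hxI, hxs⟩ := hx
  simp only [mem_insert_iff, mem_singleton_iff, not_or] at hxs
  obtain ⟨d, hd, hD⟩ := G.w_hasDerivAt VD n hv e hn hxs.1 hxs.2
  have : G.edgeDeriv (G.wFn VD n v) e x = d := by
    unfold edgeDeriv
    rw [derivWithin_of_mem_nhds (Icc_mem_nhds hxI.1 hxI.2), hD.deriv]
  rw [this]
  exact hd

lemma w_edgeDeriv_sq_intOn (VD : Finset G.V) (n : G.E → ℕ) {v : G.V} (hv : v ∈ VD)
    (e : G.E) (hn : 0 < n e) :
    IntegrableOn (fun x => (G.edgeDeriv (G.wFn VD n v) e x)^2) (Ioc (0:ℝ) (G.len e)) := by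
  apply aux_intOn_of_bound (K := (2 / (G.len e / (n e : ℝ)) + 1 / G.len e)^2)
    _ (G.edgeDeriv_sq_aesm _ e)
  filter_upwards [G.w_edgeDeriv_ae_bound VD n hv e hn] with x hx
  have h0 : (0:ℝ) ≤ |G.edgeDeriv (G.wFn VD n v) e x| := abs_nonneg _
  rw [Real.norm_eq_abs, abs_of_nonneg (sq_nonneg _)]
  calc (G.edgeDeriv (G.wFn VD n v) e x)^2 = |G.edgeDeriv (G.wFn VD n v) e x|^2 := (sq_abs _).symm
    _ ≤ (2 / (G.len e / (n e : ℝ)) + 1 / G.len e)^2 := by nlinarith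

lemma w_memVhD (VD : Finset G.V) (n : G.E → ℕ) {v : G.V} (hv : v ∈ VD)
    (hn : ∀ e, 0 < n e) : G.MemVhD VD n (G.wFn VD n v) (fun _ => 0) := by
  refine ⟨⟨⟨?_, ?_, ?_, ?_, ?_, ?_⟩, G.w_piecewiseAffine VD n hv hn⟩, fun _ _ => rfl⟩
  · exact fun e => (G.w_continuous VD n v e).continuousOn
  · intro e
    classical
    refine ⟨{0, G.len e / (n e : ℝ), G.len e - G.len e / (n e : ℝ), G.len e}, ?_⟩
    intro x hx hxs
    simp only [Finset.mem_insert, Finset.mem_singleton, not_or] at hxs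
    obtain ⟨hx0, hxh, hxh2, hxL⟩ := hxs
    obtain ⟨d, _, hD⟩ := G.w_hasDerivAt VD n hv e (hn e) hxh hxh2
    exact hD.differentiableAt.differentiableWithinAt
  · exact fun e => G.w_val0 VD n hv e (hn e)
  · exact fun e => G.w_valL VD n hv e (hn e)
  · exact fun e => ((G.w_continuous VD n v e).pow 2).intervalIntegrable 0 (G.len e)
  · intro e
    exact (intervalIntegrable_iff_integrableOn_Ioc_of_le (G.len_pos e).le).2
      (G.w_edgeDeriv_sq_intOn VD n hv e (hn e))

end MGraph

open MeasureTheory Set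

lemma aux_sq_intOn_of_bound {L K : ℝ} (f : ℝ → ℝ)
    (hf : AEStronglyMeasurable f (volume.restrict (Ioc (0:ℝ) L)))
    (hb : ∀ x ∈ Ioc (0:ℝ) L, |f x| ≤ K) :
    IntegrableOn (fun x => (f x)^2) (Ioc (0:ℝ) L) := by
  apply aux_intOn_of_bound (K := K^2)
  · have : (fun x => (f x)^2) = fun x => f x * f x := by funext x; ring
    rw [this]; exact hf.mul hf
  · filter_upwards [ae_restrict_mem measurableSet_Ioc] with x hx
    rw [Real.norm_eq_abs, abs_of_nonneg (sq_nonneg _)]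
    have := hb x hx
    calc (f x)^2 = |f x|^2 := (sq_abs _).symm
      _ ≤ K^2 := by nlinarith [abs_nonneg (f x)]

namespace MGraph
variable (G : MGraph)

lemma memH1_sq_intOn {f : GFun G} {fv : G.V → ℝ} (h : G.MemH1 f fv) (e : G.E) :
    IntegrableOn (fun x => (f e x)^2) (Ioc (0:ℝ) (G.len e)) :=
  (intervalIntegrable_iff_integrableOn_Ioc_of_le (G.len_pos e).le).1 (h.2.2.2.2.1 e)

lemma memH1_derivsq_intOn {f : GFun G} {fv : G.V → ℝ} (h : G.MemH1 f fv) (e : G.E) :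
    IntegrableOn (fun x => (G.edgeDeriv f e x)^2) (Ioc (0:ℝ) (G.len e)) :=
  (intervalIntegrable_iff_integrableOn_Ioc_of_le (G.len_pos e).le).1 (h.2.2.2.2.2 e)

lemma memH1_deriv_intOn {f : GFun G} {fv : G.V → ℝ} (h : G.MemH1 f fv) (e : G.E) :
    IntegrableOn (G.edgeDeriv f e) (Ioc (0:ℝ) (G.len e)) := by
  apply Integrable.mono' (g := fun x => (1 + (G.edgeDeriv f e x)^2)/2)
  · exact ((integrableOn_const measure_Ioc_lt_top.ne).add
      (G.memH1_derivsq_intOn h e)).div_const 2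
  · exact G.edgeDeriv_aesm f e
  · filter_upwards with x
    rw [Real.norm_eq_abs]
    nlinarith [sq_nonneg (|G.edgeDeriv f e x| - 1), sq_abs (G.edgeDeriv f e x),
      abs_nonneg (G.edgeDeriv f e x)]

lemma memH1_aesm {f : GFun G} {fv : G.V → ℝ} (h : G.MemH1 f fv) (e : G.E) :
    AEStronglyMeasurable (f e) (volume.restrict (Ioc (0:ℝ) (G.len e))) :=
  ((h.1 e).mono Ioc_subset_Icc_self).aestronglyMeasurable measurableSet_Ioc

lemma memH1_bound {f : GFun G} {fv : G.V → ℝ} (h : G.MemH1 f fv) (e : G.E) :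
    ∃ M : ℝ, 0 ≤ M ∧ ∀ x ∈ Icc (0:ℝ) (G.len e), |f e x| ≤ M := by
  obtain ⟨C, hC⟩ := isCompact_Icc.exists_bound_of_continuousOn (h.1 e)
  refine ⟨max C 0, le_max_right _ _, fun x hx => ?_⟩
  have := hC x hx
  rw [Real.norm_eq_abs] at this
  exact this.trans (le_max_left _ _)

lemma tilde_edgeDeriv (VD : Finset G.V) (u : G.V → ℝ) (e : G.E) {x : ℝ}
    (hx : x ∈ Icc (0:ℝ) (G.len e)) :
    G.edgeDeriv (G.tildeExt VD u) e x =
      ((if G.dst e ∈ VD then u (G.dst e) else 0) - (if G.src e ∈ VD then u (G.src e) else 0))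
        / G.len e :=
  ((G.tilde_hasDerivAt VD u e x).hasDerivWithinAt).derivWithin
    (uniqueDiffOn_Icc (G.len_pos e) x hx)

/-- Integrability of the `bform` integrand `u' ph' + c0 u ph` on one edge,
for `u` with a.e.-bounded `edgeDeriv` and bounded values. -/
lemma integrand_intOn {c0 : GFun G} (hc0meas : ∀ e, Measurable (c0 e))
    {C0 : ℝ} (hc0b : ∀ e, ∀ x ∈ Icc (0:ℝ) (G.len e), |c0 e x| ≤ C0)
    {ph : GFun G} {phv : G.V → ℝ} (hph : G.MemH1 ph phv)
    (u : GFun G) (e : G.E)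
    (hu_aesm : AEStronglyMeasurable (u e) (volume.restrict (Ioc (0:ℝ) (G.len e))))
    {Ku : ℝ} (hu_b : ∀ x ∈ Ioc (0:ℝ) (G.len e), |u e x| ≤ Ku)
    {Kd : ℝ}
    (hud_b : ∀ᵐ x ∂(volume.restrict (Ioc (0:ℝ) (G.len e))), |G.edgeDeriv u e x| ≤ Kd) :
    IntegrableOn (fun x => G.edgeDeriv u e x * G.edgeDeriv ph e x
      + c0 e x * u e x * ph e x) (Ioc (0:ℝ) (G.len e)) := by
  apply Integrable.add
  · apply Integrable.mono' (g := fun x => Kd * |G.edgeDeriv ph e x|)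
    · exact (G.memH1_deriv_intOn hph e).abs.const_mul Kd
    · exact (G.edgeDeriv_aesm u e).mul (G.edgeDeriv_aesm ph e)
    · filter_upwards [hud_b] with x hx
      rw [Real.norm_eq_abs, abs_mul]
      exact mul_le_mul_of_nonneg_right hx (abs_nonneg _)
  · obtain ⟨Mp, hMp0, hMp⟩ := G.memH1_bound hph e
    apply aux_intOn_of_bound (K := C0 * Ku * Mp)
    · exact (((hc0meas e).aestronglyMeasurable).mul hu_aesm).mul (G.memH1_aesm hph e)
    · filter_upwards [ae_restrict_mem measurableSet_Ioc] with x hx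
      rw [Real.norm_eq_abs, abs_mul, abs_mul]
      have h1 := hc0b e x (Ioc_subset_Icc_self hx)
      have h2 := hu_b x hx
      have h3 := hMp x (Ioc_subset_Icc_self hx)
      have := abs_nonneg (c0 e x)
      have := abs_nonneg (u e x)
      have := abs_nonneg (ph e x)
      have hC0 : 0 ≤ C0 := (abs_nonneg _).trans h1
      have hKu : 0 ≤ Ku := (abs_nonneg _).trans h2
      exact mul_le_mul (mul_le_mul h1 h2 (abs_nonneg _) hC0) h3 (abs_nonneg _)
        (mul_nonneg hC0 hKu)

/-- The key splitting `a(φ_v, p) = a(w_v, p) + a(t_v, p)`. -/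
lemma bform_split (VD : Finset G.V) (n : G.E → ℕ) {v : G.V} (hv : v ∈ VD)
    (hn : ∀ e, 0 < n e) {c0 : GFun G} (hc0meas : ∀ e, Measurable (c0 e))
    {C0 : ℝ} (hc0b : ∀ e, ∀ x ∈ Icc (0:ℝ) (G.len e), |c0 e x| ≤ C0)
    {ph : GFun G} {phv : G.V → ℝ} (hph : G.MemH1 ph phv) :
    G.bform c0 (G.hatFn n v) ph =
      G.bform c0 (G.wFn VD n v) ph + G.bform c0 (G.tildeExt VD (G.deltaV v)) ph := by
  unfold bform
  rw [← Finset.sum_add_distrib]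
  apply Finset.sum_congr rfl
  intro e _
  have hL := G.len_pos e
  -- integrability of the w-part and the t-part
  have hIw : IntegrableOn (fun x => G.edgeDeriv (G.wFn VD n v) e x * G.edgeDeriv ph e x
      + c0 e x * G.wFn VD n v e x * ph e x) (Ioc (0:ℝ) (G.len e)) := by
    apply G.integrand_intOn hc0meas hc0b hph
    · exact (G.w_continuous VD n v e).aestronglyMeasurable
    · exact fun x hx => G.w_bound VD n v e (hn e) (Ioc_subset_Icc_self hx)
    · exact G.w_edgeDeriv_ae_bound VD n hv e (hn e)
  have hIt : IntegrableOn (fun x => G.edgeDeriv (G.tildeExt VD (G.deltaV v)) e x * G.edgeDeriv ph e x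
      + c0 e x * G.tildeExt VD (G.deltaV v) e x * ph e x) (Ioc (0:ℝ) (G.len e)) := by
    apply G.integrand_intOn hc0meas hc0b hph
    · exact (G.tilde_continuous VD (G.deltaV v) e).aestronglyMeasurable
    · exact fun x hx => G.tilde_bound VD (G.deltaV v) (G.deltaV_mem v) e (Ioc_subset_Icc_self hx)
    · show ∀ᵐ x ∂(volume.restrict (Ioc (0:ℝ) (G.len e))),
        |G.edgeDeriv (G.tildeExt VD (G.deltaV v)) e x| ≤ 1 / G.len e
      filter_upwards [ae_restrict_mem measurableSet_Ioc] with x hx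
      rw [G.tilde_edgeDeriv VD (G.deltaV v) e (Ioc_subset_Icc_self hx)]
      rw [G.delta_src VD hv e, G.delta_dst VD hv e, abs_div, abs_of_nonneg hL.le]
      have : |(if G.dst e = v then (1:ℝ) else 0) - (if G.src e = v then (1:ℝ) else 0)| ≤ 1 := by
        rw [abs_le]; constructor <;> split_ifs <;> norm_num
      gcongr
  rw [intervalIntegral.integral_of_le hL.le, intervalIntegral.integral_of_le hL.le,
    intervalIntegral.integral_of_le hL.le, ← integral_add hIw hIt]
  apply integral_congr_ae
  filter_upwards [aux_ae_Ioo (L := G.len e)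
    ({G.len e / (n e : ℝ), G.len e - G.len e / (n e : ℝ)} : Set ℝ)
    ((countable_singleton _).insert _)] with x hx
  obtain ⟨hxI, hxs⟩ := hx
  simp only [mem_insert_iff, mem_singleton_iff, not_or] at hxs
  obtain ⟨dh, _, hDh⟩ := G.hat_hasDerivAt n v e (hn e) hxs.1 hxs.2
  have hDt := G.tilde_hasDerivAt VD (G.deltaV v) e x
  set dt := ((if G.dst e ∈ VD then G.deltaV v (G.dst e) else 0)
    - (if G.src e ∈ VD then G.deltaV v (G.src e) else 0)) / G.len e with hdt
  have e1 : G.edgeDeriv (G.hatFn n v) e x = dh := by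
    unfold edgeDeriv
    rw [derivWithin_of_mem_nhds (Icc_mem_nhds hxI.1 hxI.2)]
    exact hDh.deriv
  have e2 : G.edgeDeriv (G.wFn VD n v) e x = dh - dt := by
    unfold edgeDeriv
    rw [derivWithin_of_mem_nhds (Icc_mem_nhds hxI.1 hxI.2)]
    exact (hDh.sub hDt).deriv
  have e3 : G.edgeDeriv (G.tildeExt VD (G.deltaV v)) e x = dt :=
    G.tilde_edgeDeriv VD (G.deltaV v) e (mem_Icc_of_Ioo hxI)
  have e4 : G.hatFn n v e x = G.wFn VD n v e x + G.tildeExt VD (G.deltaV v) e x := by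
    unfold wFn; ring
  rw [e1, e2, e3, e4]
  ring
end MGraph

open MeasureTheory Set

namespace MGraph
variable (G : MGraph)

lemma l2normSq_eq (f : GFun G) :
    G.l2normSq f = ∑ e : G.E, ∫ x in Ioc (0:ℝ) (G.len e), (f e x)^2 :=
  Finset.sum_congr rfl fun e _ => intervalIntegral.integral_of_le (G.len_pos e).le

lemma l2normSq_nonneg (f : GFun G) : 0 ≤ G.l2normSq f :=
  Finset.sum_nonneg fun e _ =>
    intervalIntegral.integral_nonneg (G.len_pos e).le (fun x _ => sq_nonneg _)

lemma derivPart_nonneg (f : GFun G) :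
    0 ≤ ∑ e : G.E, ∫ x in (0:ℝ)..(G.len e), (G.edgeDeriv f e x)^2 :=
  Finset.sum_nonneg fun e _ =>
    intervalIntegral.integral_nonneg (G.len_pos e).le (fun x _ => sq_nonneg _)

lemma h1normSq_nonneg (f : GFun G) : 0 ≤ G.h1normSq f :=
  add_nonneg (G.l2normSq_nonneg f) (G.derivPart_nonneg f)

lemma l2_le_h1 (f : GFun G) : G.l2normSq f ≤ G.h1normSq f :=
  le_add_of_nonneg_right (G.derivPart_nonneg f)

lemma memL2_intOn {y : GFun G} (hy : G.MemL2 y) (e : G.E) :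
    IntegrableOn (fun x => (y e x)^2) (Ioc (0:ℝ) (G.len e)) :=
  (intervalIntegrable_iff_integrableOn_Ioc_of_le (G.len_pos e).le).1 (hy e)

/-- Cauchy–Schwarz for `ip2` against a bounded function. -/
lemma ip2_bound {y : GFun G} (hy : G.MemL2 y) (u : GFun G) {Ku : ℝ} (hKu : 0 ≤ Ku)
    (hsq : ∀ e, IntegrableOn (fun x => (u e x)^2) (Ioc (0:ℝ) (G.len e)))
    (hb : ∀ e, ∀ x ∈ Ioc (0:ℝ) (G.len e), |u e x| ≤ Ku) :
    |G.ip2 y u| ≤ Ku * Real.sqrt (∑ e : G.E, G.len e) * Real.sqrt (G.l2normSq y) := by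
  have conv : G.ip2 y u = ∑ e : G.E, ∫ x in Ioc (0:ℝ) (G.len e), y e x * u e x :=
    Finset.sum_congr rfl fun e _ => intervalIntegral.integral_of_le (G.len_pos e).le
  set a : G.E → ℝ := fun e => Real.sqrt (∫ x in Ioc (0:ℝ) (G.len e), (y e x)^2) with ha
  have step1 : |G.ip2 y u| ≤ ∑ e : G.E, a e * (Ku * Real.sqrt (G.len e)) := by
    rw [conv]
    refine (Finset.abs_sum_le_sum_abs _ _).trans (Finset.sum_le_sum fun e _ => ?_)
    have h1 := aux_cs_L2 (y e) (u e) (G.memL2_intOn hy e) (hsq e)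
    have h2 : Real.sqrt (∫ x in Ioc (0:ℝ) (G.len e), (u e x)^2) ≤ Ku * Real.sqrt (G.len e) :=
      aux_sqrt_int_le (G.len_pos e).le hKu (u e) (hsq e) (hb e)
    calc |∫ x in Ioc (0:ℝ) (G.len e), y e x * u e x| ≤
        a e * Real.sqrt (∫ x in Ioc (0:ℝ) (G.len e), (u e x)^2) := h1
      _ ≤ a e * (Ku * Real.sqrt (G.len e)) :=
        mul_le_mul_of_nonneg_left h2 (Real.sqrt_nonneg _)
  have step2 : ∑ e : G.E, a e * (Ku * Real.sqrt (G.len e))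
      = Ku * ∑ e : G.E, a e * Real.sqrt (G.len e) := by
    rw [Finset.mul_sum]; apply Finset.sum_congr rfl; intro e _; ring
  have step3 : ∑ e : G.E, a e * Real.sqrt (G.len e) ≤
      Real.sqrt (G.l2normSq y) * Real.sqrt (∑ e : G.E, G.len e) := by
    have := aux_sum_cs a (fun e => Real.sqrt (G.len e))
    have e1 : ∑ e : G.E, (a e)^2 = G.l2normSq y := by
      rw [G.l2normSq_eq]
      apply Finset.sum_congr rfl; intro e _
      exact Real.sq_sqrt (setIntegral_nonneg measurableSet_Ioc fun x _ => sq_nonneg _)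
    have e2 : ∑ e : G.E, (Real.sqrt (G.len e))^2 = ∑ e : G.E, G.len e := by
      apply Finset.sum_congr rfl; intro e _
      exact Real.sq_sqrt (G.len_pos e).le
    rw [e1, e2] at this
    exact this
  calc |G.ip2 y u| ≤ Ku * ∑ e : G.E, a e * Real.sqrt (G.len e) := by
        rw [← step2]; exact step1
    _ ≤ Ku * (Real.sqrt (G.l2normSq y) * Real.sqrt (∑ e : G.E, G.len e)) :=
        mul_le_mul_of_nonneg_left step3 hKu
    _ = Ku * Real.sqrt (∑ e : G.E, G.len e) * Real.sqrt (G.l2normSq y) := by ring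

/-- Cauchy–Schwarz for `ip2` between two `L²` functions. -/
lemma ip2_pair_bound {y f : GFun G} (hy : G.MemL2 y)
    (hf : ∀ e, IntegrableOn (fun x => (f e x)^2) (Ioc (0:ℝ) (G.len e))) :
    G.ip2 y f ≤ Real.sqrt (G.l2normSq y) * Real.sqrt (G.l2normSq f) := by
  have conv : G.ip2 y f = ∑ e : G.E, ∫ x in Ioc (0:ℝ) (G.len e), y e x * f e x :=
    Finset.sum_congr rfl fun e _ => intervalIntegral.integral_of_le (G.len_pos e).le
  set a : G.E → ℝ := fun e => Real.sqrt (∫ x in Ioc (0:ℝ) (G.len e), (y e x)^2) with ha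
  set b : G.E → ℝ := fun e => Real.sqrt (∫ x in Ioc (0:ℝ) (G.len e), (f e x)^2) with hb
  have step1 : G.ip2 y f ≤ ∑ e : G.E, a e * b e := by
    rw [conv]
    apply Finset.sum_le_sum
    intro e _
    exact (le_abs_self _).trans (aux_cs_L2 (y e) (f e) (G.memL2_intOn hy e) (hf e))
  have step3 := aux_sum_cs a b
  have e1 : ∑ e : G.E, (a e)^2 = G.l2normSq y := by
    rw [G.l2normSq_eq]
    exact Finset.sum_congr rfl fun e _ =>
      Real.sq_sqrt (setIntegral_nonneg measurableSet_Ioc fun x _ => sq_nonneg _)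
  have e2 : ∑ e : G.E, (b e)^2 = G.l2normSq f := by
    rw [G.l2normSq_eq]
    exact Finset.sum_congr rfl fun e _ =>
      Real.sq_sqrt (setIntegral_nonneg measurableSet_Ioc fun x _ => sq_nonneg _)
  rw [e1, e2] at step3
  exact step1.trans step3

end MGraph

open MeasureTheory Set

namespace MGraph
variable (G : MGraph)

lemma sqrt_D_le (ph : GFun G) :
    Real.sqrt (∑ e : G.E, ∫ x in Ioc (0:ℝ) (G.len e), (G.edgeDeriv ph e x)^2)
      ≤ Real.sqrt (G.h1normSq ph) := by
  apply Real.sqrt_le_sqrt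
  have conv : ∑ e : G.E, ∫ x in Ioc (0:ℝ) (G.len e), (G.edgeDeriv ph e x)^2
      = ∑ e : G.E, ∫ x in (0:ℝ)..(G.len e), (G.edgeDeriv ph e x)^2 :=
    Finset.sum_congr rfl fun e _ => (intervalIntegral.integral_of_le (G.len_pos e).le).symm
  rw [conv]
  unfold h1normSq
  linarith [G.l2normSq_nonneg ph]

lemma sqrt_P_le (ph : GFun G) :
    Real.sqrt (G.l2normSq ph) ≤ Real.sqrt (G.h1normSq ph) :=
  Real.sqrt_le_sqrt (G.l2_le_h1 ph)

lemma bform_t_bound (VD : Finset G.V) {v : G.V} (hv : v ∈ VD)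
    {c0 : GFun G} (hc0meas : ∀ e, Measurable (c0 e))
    {C0 : ℝ} (hC0 : 0 ≤ C0) (hc0b : ∀ e, ∀ x ∈ Icc (0:ℝ) (G.len e), |c0 e x| ≤ C0)
    {ph : GFun G} {phv : G.V → ℝ} (hph : G.MemH1 ph phv) :
    |G.bform c0 (G.tildeExt VD (G.deltaV v)) ph| ≤
      (Real.sqrt (∑ e : G.E, 1/G.len e) + C0 * Real.sqrt (∑ e : G.E, G.len e))
        * Real.sqrt (G.h1normSq ph) := by
  classical
  set tp := G.tildeExt VD (G.deltaV v) with htp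
  set a1 : G.E → ℝ := fun e => Real.sqrt (1/G.len e) with ha1
  set a2 : G.E → ℝ := fun e => Real.sqrt (G.len e) with ha2
  set d1 : G.E → ℝ := fun e => Real.sqrt (∫ x in Ioc (0:ℝ) (G.len e), (G.edgeDeriv ph e x)^2)
    with hd1
  set d2 : G.E → ℝ := fun e => Real.sqrt (∫ x in Ioc (0:ℝ) (G.len e), (ph e x)^2) with hd2
  have edge : ∀ e : G.E, |∫ x in (0:ℝ)..(G.len e),
      (G.edgeDeriv tp e x * G.edgeDeriv ph e x + c0 e x * tp e x * ph e x)| ≤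
      a1 e * d1 e + C0 * (a2 e * d2 e) := by
    intro e
    have hL := G.len_pos e
    set dt := ((if G.dst e ∈ VD then G.deltaV v (G.dst e) else 0)
      - (if G.src e ∈ VD then G.deltaV v (G.src e) else 0)) / G.len e with hdt
    have hdtb : |dt| ≤ 1/G.len e := by
      rw [hdt, G.delta_src VD hv e, G.delta_dst VD hv e, abs_div, abs_of_nonneg hL.le]
      have h1 : |(if G.dst e = v then (1:ℝ) else 0) - (if G.src e = v then (1:ℝ) else 0)| ≤ 1 := by
        rw [abs_le]; constructor <;> split_ifs <;> norm_num
      gcongr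
    have eq1 : EqOn (fun x => G.edgeDeriv tp e x * G.edgeDeriv ph e x)
        (fun x => dt * G.edgeDeriv ph e x) (Ioc (0:ℝ) (G.len e)) := by
      intro x hx
      simp only
      rw [htp, G.tilde_edgeDeriv VD (G.deltaV v) e (Ioc_subset_Icc_self hx), ← hdt]
    have It1 : IntegrableOn (fun x => G.edgeDeriv tp e x * G.edgeDeriv ph e x)
        (Ioc (0:ℝ) (G.len e)) := by
      apply IntegrableOn.congr_fun ((G.memH1_deriv_intOn hph e).const_mul dt) eq1.symm
        measurableSet_Ioc
    have htpb : ∀ x ∈ Ioc (0:ℝ) (G.len e), |tp e x| ≤ 1 := fun x hx =>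
      G.tilde_bound VD (G.deltaV v) (G.deltaV_mem v) e (Ioc_subset_Icc_self hx)
    have hc0tp_aesm : AEStronglyMeasurable (fun x => c0 e x * tp e x)
        (volume.restrict (Ioc (0:ℝ) (G.len e))) :=
      ((hc0meas e).aestronglyMeasurable).mul (G.tilde_continuous VD (G.deltaV v) e).aestronglyMeasurable
    have hc0tpb : ∀ x ∈ Ioc (0:ℝ) (G.len e), |c0 e x * tp e x| ≤ C0 := by
      intro x hx
      rw [abs_mul]
      calc |c0 e x| * |tp e x| ≤ C0 * 1 :=
          mul_le_mul (hc0b e x (Ioc_subset_Icc_self hx)) (htpb x hx) (abs_nonneg _) hC0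
        _ = C0 := mul_one _
    have It2 : IntegrableOn (fun x => c0 e x * tp e x * ph e x) (Ioc (0:ℝ) (G.len e)) := by
      obtain ⟨Mp, hMp0, hMp⟩ := G.memH1_bound hph e
      apply aux_intOn_of_bound (K := C0 * Mp)
      · exact hc0tp_aesm.mul (G.memH1_aesm hph e)
      · filter_upwards [ae_restrict_mem measurableSet_Ioc] with x hx
        rw [Real.norm_eq_abs, abs_mul]
        exact mul_le_mul (hc0tpb x hx) (hMp x (Ioc_subset_Icc_self hx)) (abs_nonneg _) hC0
    rw [intervalIntegral.integral_of_le hL.le, integral_add It1 It2]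
    refine (abs_add_le _ _).trans (add_le_add ?_ ?_)
    · -- first term
      rw [setIntegral_congr_fun measurableSet_Ioc eq1]
      have hconst : IntegrableOn (fun _x : ℝ => dt^2) (Ioc (0:ℝ) (G.len e)) :=
        integrableOn_const measure_Ioc_lt_top.ne
      have hcs := aux_cs_L2 (fun _ => dt) (G.edgeDeriv ph e) hconst
        (G.memH1_derivsq_intOn hph e)
      have h2 : Real.sqrt (∫ _x in Ioc (0:ℝ) (G.len e), dt^2) ≤ |dt| * Real.sqrt (G.len e) :=
        aux_sqrt_int_le hL.le (abs_nonneg dt) (fun _ => dt) hconst (fun x _ => le_refl _)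
      have h3 : (1/G.len e) * Real.sqrt (G.len e) = Real.sqrt (1/G.len e) := by
        rw [one_div, Real.sqrt_inv]
        field_simp
        exact Real.sq_sqrt hL.le
      calc |∫ x in Ioc (0:ℝ) (G.len e), dt * G.edgeDeriv ph e x|
          ≤ Real.sqrt (∫ _x in Ioc (0:ℝ) (G.len e), dt^2) * d1 e := hcs
        _ ≤ (|dt| * Real.sqrt (G.len e)) * d1 e :=
            mul_le_mul_of_nonneg_right h2 (Real.sqrt_nonneg _)
        _ ≤ ((1/G.len e) * Real.sqrt (G.len e)) * d1 e := by
            have := mul_le_mul_of_nonneg_right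
              (mul_le_mul_of_nonneg_right hdtb (Real.sqrt_nonneg (G.len e)))
              (Real.sqrt_nonneg (∫ x in Ioc (0:ℝ) (G.len e), (G.edgeDeriv ph e x)^2))
            exact this
        _ = a1 e * d1 e := by rw [h3]
    · -- second term
      have hcs := aux_cs_L2 (fun x => c0 e x * tp e x) (ph e)
        (aux_sq_intOn_of_bound _ hc0tp_aesm hc0tpb)
        (G.memH1_sq_intOn hph e)
      have h2 : Real.sqrt (∫ x in Ioc (0:ℝ) (G.len e), (c0 e x * tp e x)^2)
          ≤ C0 * Real.sqrt (G.len e) :=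
        aux_sqrt_int_le hL.le hC0 _ (aux_sq_intOn_of_bound _ hc0tp_aesm hc0tpb) hc0tpb
      calc |∫ x in Ioc (0:ℝ) (G.len e), c0 e x * tp e x * ph e x|
          ≤ Real.sqrt (∫ x in Ioc (0:ℝ) (G.len e), (c0 e x * tp e x)^2) * d2 e := hcs
        _ ≤ (C0 * Real.sqrt (G.len e)) * d2 e :=
            mul_le_mul_of_nonneg_right h2 (Real.sqrt_nonneg _)
        _ = C0 * (a2 e * d2 e) := by rw [ha2]; ring
  -- sum the edge bounds
  have hsum : |G.bform c0 tp ph| ≤ ∑ e : G.E, (a1 e * d1 e + C0 * (a2 e * d2 e)) := by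
    unfold bform
    exact (Finset.abs_sum_le_sum_abs _ _).trans (Finset.sum_le_sum fun e _ => edge e)
  have hsplit : ∑ e : G.E, (a1 e * d1 e + C0 * (a2 e * d2 e))
      = (∑ e : G.E, a1 e * d1 e) + C0 * ∑ e : G.E, a2 e * d2 e := by
    rw [Finset.sum_add_distrib, Finset.mul_sum]
  have hcs1 : ∑ e : G.E, a1 e * d1 e ≤
      Real.sqrt (∑ e : G.E, 1/G.len e) * Real.sqrt (G.h1normSq ph) := by
    have h := aux_sum_cs a1 d1
    have e1 : ∑ e : G.E, (a1 e)^2 = ∑ e : G.E, 1/G.len e :=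
      Finset.sum_congr rfl fun e _ => Real.sq_sqrt (one_div_nonneg.2 (G.len_pos e).le)
    have e2 : ∑ e : G.E, (d1 e)^2
        = ∑ e : G.E, ∫ x in Ioc (0:ℝ) (G.len e), (G.edgeDeriv ph e x)^2 :=
      Finset.sum_congr rfl fun e _ =>
        Real.sq_sqrt (setIntegral_nonneg measurableSet_Ioc fun x _ => sq_nonneg _)
    rw [e1, e2] at h
    exact h.trans (mul_le_mul_of_nonneg_left (G.sqrt_D_le ph) (Real.sqrt_nonneg _))
  have hcs2 : ∑ e : G.E, a2 e * d2 e ≤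
      Real.sqrt (∑ e : G.E, G.len e) * Real.sqrt (G.h1normSq ph) := by
    have h := aux_sum_cs a2 d2
    have e1 : ∑ e : G.E, (a2 e)^2 = ∑ e : G.E, G.len e :=
      Finset.sum_congr rfl fun e _ => Real.sq_sqrt (G.len_pos e).le
    have e2 : ∑ e : G.E, (d2 e)^2 = G.l2normSq ph := by
      rw [G.l2normSq_eq]
      exact Finset.sum_congr rfl fun e _ =>
        Real.sq_sqrt (setIntegral_nonneg measurableSet_Ioc fun x _ => sq_nonneg _)
    rw [e1, e2] at h
    refine h.trans ?_
    exact mul_le_mul_of_nonneg_left (G.sqrt_P_le ph) (Real.sqrt_nonneg _)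
  calc |G.bform c0 tp ph| ≤ (∑ e : G.E, a1 e * d1 e) + C0 * ∑ e : G.E, a2 e * d2 e := by
        rw [← hsplit]; exact hsum
    _ ≤ Real.sqrt (∑ e : G.E, 1/G.len e) * Real.sqrt (G.h1normSq ph)
        + C0 * (Real.sqrt (∑ e : G.E, G.len e) * Real.sqrt (G.h1normSq ph)) :=
        add_le_add hcs1 (mul_le_mul_of_nonneg_left hcs2 hC0)
    _ = (Real.sqrt (∑ e : G.E, 1/G.len e) + C0 * Real.sqrt (∑ e : G.E, G.len e))
        * Real.sqrt (G.h1normSq ph) := by ring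
end MGraph

/-- Lemma 3.3: stability of the discrete Kirchhoff operator,
`|S_h* y|₂ = |K_h(P_h y)|₂ ≤ c ‖y‖_{L²(Γ)}` with `c` independent of the mesh parameter. -/
theorem discrete_kirchhoff_stability
    (G : MGraph) (VD : Finset G.V) (c0 : GFun G)
    (hc0meas : ∀ e, Measurable (c0 e))
    (hc0 : ∀ e, ∀ x ∈ Icc (0:ℝ) (G.len e), 0 ≤ c0 e x)
    (hc0b : ∃ C : ℝ, ∀ e, ∀ x ∈ Icc (0:ℝ) (G.len e), c0 e x ≤ C)
    (hbdd : ∃ C > 0, ∀ y yv w wv, G.MemH1D VD y yv → G.MemH1D VD w wv →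
      |G.bform c0 y w| ≤ C * Real.sqrt (G.h1normSq y) * Real.sqrt (G.h1normSq w))
    (hcoer : ∃ α > 0, ∀ y yv, G.MemH1D VD y yv → α * G.h1normSq y ≤ G.bform c0 y y) :
    ∃ c > 0, ∀ (n : G.E → ℕ), (∀ e, 0 < n e) →
      ∀ y : GFun G, G.MemL2 y →
      ∀ (ph : GFun G) (phv : G.V → ℝ), G.MemVhD VD n ph phv →
        (∀ w wv, G.MemVhD VD n w wv → G.bform c0 w ph = G.ip2 y w) →
        Real.sqrt (∑ v ∈ VD, (G.Khop c0 n y ph v)^2) ≤ c * Real.sqrt (G.l2normSq y) := by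
  classical
  obtain ⟨C, hC⟩ := hc0b
  obtain ⟨α, hα, hco⟩ := hcoer
  set C0 := max C 0 with hC0def
  have hC0 : 0 ≤ C0 := le_max_right _ _
  have hc0b' : ∀ e, ∀ x ∈ Icc (0:ℝ) (G.len e), |c0 e x| ≤ C0 := fun e x hx => by
    rw [abs_of_nonneg (hc0 e x hx)]
    exact (hC e x hx).trans (le_max_left _ _)
  set Λr := Real.sqrt (∑ e : G.E, G.len e) with hΛ
  set KT := Real.sqrt (∑ e : G.E, 1/G.len e) with hKTdef
  have hΛ0 : 0 ≤ Λr := Real.sqrt_nonneg _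
  have hKT0 : 0 ≤ KT := Real.sqrt_nonneg _
  set B := 5 * Λr + (KT + C0 * Λr) / α with hB
  have hB0 : 0 ≤ B := by
    apply add_nonneg (by positivity)
    exact div_nonneg (add_nonneg hKT0 (mul_nonneg hC0 hΛ0)) hα.le
  have hcard : (0:ℝ) ≤ Real.sqrt (VD.card : ℝ) := Real.sqrt_nonneg _
  refine ⟨Real.sqrt (VD.card : ℝ) * B + 1, by positivity, ?_⟩
  intro n hn y hy ph phv hph hGal
  set Y := Real.sqrt (G.l2normSq y) with hY
  have hY0 : 0 ≤ Y := Real.sqrt_nonneg _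
  have hphH1 : G.MemH1 ph phv := hph.1.1
  have hl2ph : G.MemL2 ph := hphH1.2.2.2.2.1
  have hH1D : G.MemH1D VD ph phv := ⟨hphH1, hph.2⟩
  -- energy estimate for ph
  set S := Real.sqrt (G.h1normSq ph) with hS
  have hS0 : 0 ≤ S := Real.sqrt_nonneg _
  have hSle : S ≤ Y / α := by
    have hco1 : α * G.h1normSq ph ≤ G.bform c0 ph ph := hco ph phv hH1D
    have heq : G.bform c0 ph ph = G.ip2 y ph := hGal ph phv hph
    have hip : G.ip2 y ph ≤ Y * Real.sqrt (G.l2normSq ph) :=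
      G.ip2_pair_bound hy (fun e => G.memL2_intOn hl2ph e)
    have hip2 : G.ip2 y ph ≤ Y * S :=
      hip.trans (mul_le_mul_of_nonneg_left (G.sqrt_P_le ph) hY0)
    have hSsq : S^2 = G.h1normSq ph := Real.sq_sqrt (G.h1normSq_nonneg ph)
    have chain : α * S^2 ≤ Y * S := by
      rw [hSsq]
      calc α * G.h1normSq ph ≤ G.bform c0 ph ph := hco1
        _ = G.ip2 y ph := heq
        _ ≤ Y * S := hip2
    rcases eq_or_lt_of_le hS0 with h0 | h0
    · rw [← h0]; positivity
    · rw [le_div_iff₀ hα]; nlinarith [chain]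
  -- per-vertex bound
  have key : ∀ v ∈ VD, |G.Khop c0 n y ph v| ≤ B * Y := by
    intro v hv
    have hsplit := G.bform_split VD n hv hn hc0meas hc0b' hphH1
    have hwmem := G.w_memVhD VD n hv hn
    have hgal_w := hGal _ _ hwmem
    have hKhop : G.Khop c0 n y ph v = G.ip2 y (G.wFn VD n v)
        + G.bform c0 (G.tildeExt VD (G.deltaV v)) ph - G.ip2 y (G.hatFn n v) := by
      unfold MGraph.Khop
      rw [hsplit, hgal_w]
    have hw_b : |G.ip2 y (G.wFn VD n v)| ≤ 3 * Λr * Y := by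
      apply G.ip2_bound hy (G.wFn VD n v) (Ku := 3) (by norm_num)
      · exact fun e => ((G.w_continuous VD n v e).pow 2).integrableOn_Ioc
      · exact fun e x hx => G.w_bound VD n v e (hn e) (Ioc_subset_Icc_self hx)
    have hhat_b : |G.ip2 y (G.hatFn n v)| ≤ 2 * Λr * Y := by
      apply G.ip2_bound hy (G.hatFn n v) (Ku := 2) (by norm_num)
      · exact fun e => ((G.hat_continuous n v e).pow 2).integrableOn_Ioc
      · intro e x hx
        obtain ⟨h1, h2⟩ := G.hat_bound n v e (hn e) (Ioc_subset_Icc_self hx)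
        rw [abs_of_nonneg h1]; exact h2
    have ht_b : |G.bform c0 (G.tildeExt VD (G.deltaV v)) ph| ≤ (KT + C0 * Λr) * S :=
      G.bform_t_bound VD hv hc0meas hC0 hc0b' hphH1
    have ht_b2 : |G.bform c0 (G.tildeExt VD (G.deltaV v)) ph| ≤ (KT + C0 * Λr) * (Y / α) :=
      ht_b.trans (mul_le_mul_of_nonneg_left hSle (add_nonneg hKT0 (mul_nonneg hC0 hΛ0)))
    calc |G.Khop c0 n y ph v| = |G.ip2 y (G.wFn VD n v)
          + G.bform c0 (G.tildeExt VD (G.deltaV v)) ph - G.ip2 y (G.hatFn n v)| := by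
          rw [hKhop]
      _ ≤ |G.ip2 y (G.wFn VD n v) + G.bform c0 (G.tildeExt VD (G.deltaV v)) ph|
          + |G.ip2 y (G.hatFn n v)| := abs_sub _ _
      _ ≤ |G.ip2 y (G.wFn VD n v)| + |G.bform c0 (G.tildeExt VD (G.deltaV v)) ph|
          + |G.ip2 y (G.hatFn n v)| := by
          have := abs_add_le (G.ip2 y (G.wFn VD n v)) (G.bform c0 (G.tildeExt VD (G.deltaV v)) ph)
          linarith
      _ ≤ 3 * Λr * Y + (KT + C0 * Λr) * (Y / α) + 2 * Λr * Y := by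
          linarith [hw_b, ht_b2, hhat_b]
      _ = B * Y := by rw [hB]; ring
  -- sum over the Dirichlet vertices
  have hsum : ∑ v ∈ VD, (G.Khop c0 n y ph v)^2 ≤ (VD.card : ℝ) * (B*Y)^2 := by
    calc ∑ v ∈ VD, (G.Khop c0 n y ph v)^2 ≤ ∑ _v ∈ VD, (B*Y)^2 := by
          apply Finset.sum_le_sum
          intro v hv
          rw [← sq_abs]
          exact pow_le_pow_left₀ (abs_nonneg _) (key v hv) 2
      _ = (VD.card : ℝ) * (B*Y)^2 := by
          rw [Finset.sum_const, nsmul_eq_mul]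
  have hBY : 0 ≤ B * Y := mul_nonneg hB0 hY0
  calc Real.sqrt (∑ v ∈ VD, (G.Khop c0 n y ph v)^2)
      ≤ Real.sqrt ((VD.card : ℝ) * (B*Y)^2) := Real.sqrt_le_sqrt hsum
    _ = Real.sqrt (VD.card : ℝ) * (B*Y) := by
        rw [Real.sqrt_mul (Nat.cast_nonneg _), Real.sqrt_sq hBY]
    _ = (Real.sqrt (VD.card : ℝ) * B) * Y := by ring
    _ ≤ (Real.sqrt (VD.card : ℝ) * B + 1) * Y := by nlinarith [hY0]
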